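/- Every regular k-germ is alternating: if ω is a k-germ on D that is nonatomic and closed on every affine k-plane, then for every permutation σ of {0,…,k} and every k-simplex S, ⟨σS, ω⟩ = sign(σ)·⟨S, ω⟩. -/

import Mathlib

/-- The euclidean space `ℝ^d` in which simplices live. -/
abbrev Pt (d : ℕ) := EuclideanSpace ℝ (Fin d)

/-- The `k`-dimensional volume of a `k`-simplex `[p₀ … p_k]` in `ℝ^d`. -/
noncomputable def vol {d k : ℕ} (S : Fin (k + 1) → Pt d) : ℝ :=
  (1 / (Nat.factorial k : ℝ)) *
    Real.sqrt (Matrix.det (Matrix.of fun i j : Fin k =>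
      ∑ m : Fin d, (S i.succ m - S 0 m) * (S j.succ m - S 0 m)))

/-- The coboundary of a germ, dual to the alternating-sum boundary operator. -/
noncomputable def cobdry {d n : ℕ} (ω : (Fin n → Pt d) → ℝ) :
    (Fin (n + 1) → Pt d) → ℝ :=
  fun T => ∑ i : Fin (n + 1), (-1 : ℝ) ^ (i : ℕ) * ω (T ∘ i.succAbove)

/-- A `k`-germ on `D` is nonatomic if it vanishes on every `k`-simplex in `D`
of zero `k`-volume. -/
def Nonatomic {d k : ℕ} (D : Set (Pt d)) (ω : (Fin (k + 1) → Pt d) → ℝ) : Prop :=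
  ∀ S : Fin (k + 1) → Pt d, convexHull ℝ (Set.range S) ⊆ D → vol S = 0 → ω S = 0

/-- A `k`-germ on `D` is closed on `k`-planes if the pull-back by every affine map
`φ : ℝ^k → ℝ^d` has vanishing coboundary on simplices mapped into `D`. -/
def ClosedOnPlanes {d k : ℕ} (D : Set (Pt d)) (ω : (Fin (k + 1) → Pt d) → ℝ) : Prop :=
  ∀ φ : (Fin k → ℝ) →ᵃ[ℝ] Pt d, ∀ T : Fin (k + 2) → (Fin k → ℝ),
    convexHull ℝ (Set.range fun i => φ (T i)) ⊆ D →
      cobdry (fun S : Fin (k + 1) → Pt k => ω (fun i => φ (S i).ofLp)) (fun i => WithLp.toLp 2 (T i)) = 0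

/-- A simplex with a repeated vertex has zero volume. -/
lemma vol_eq_zero_of_repeat {d k : ℕ} {S : Fin (k + 1) → Pt d} {a b : Fin (k + 1)}
    (hab : a ≠ b) (h : S a = S b) : vol S = 0 := by
  have hdet : Matrix.det (Matrix.of fun i j : Fin k =>
      ∑ m : Fin d, (S i.succ m - S 0 m) * (S j.succ m - S 0 m)) = 0 := by
    induction a using Fin.cases with
    | zero =>
      induction b using Fin.cases with
      | zero => exact absurd rfl hab
      | succ b =>
        apply Matrix.det_eq_zero_of_row_eq_zero b
        intro j
        simp only [Matrix.of_apply]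
        apply Finset.sum_eq_zero
        intro m _
        rw [← h]
        ring
    | succ a =>
      induction b using Fin.cases with
      | zero =>
        apply Matrix.det_eq_zero_of_row_eq_zero a
        intro j
        simp only [Matrix.of_apply]
        apply Finset.sum_eq_zero
        intro m _
        rw [h]
        ring
      | succ b =>
        apply Matrix.det_zero_of_row_eq (i := a) (j := b)
        · intro hc; exact hab (by rw [hc])
        · funext j
          simp only [Matrix.of_apply]
          rw [h]
  rw [vol, hdet, Real.sqrt_zero, mul_zero]

/-- Value-level description of `succAbove`. -/
lemma val_succAbove {n : ℕ} (i : Fin (n + 1)) (m : Fin n) :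
    ((i.succAbove m : Fin (n + 1)) : ℕ) = if (m : ℕ) < (i : ℕ) then (m : ℕ) else (m : ℕ) + 1 := by
  rcases Nat.lt_or_ge (m : ℕ) (i : ℕ) with h | h
  · rw [if_pos h, Fin.succAbove_of_castSucc_lt _ _ (by simpa [Fin.lt_def] using h)]
    simp
  · rw [if_neg (not_lt.mpr h), Fin.succAbove_of_le_castSucc _ _ (by simpa [Fin.le_def] using h)]
    simp

/-- The key step : the value of a regular germ changes sign under an adjacent
transposition of the vertices. -/
lemma swap_adjacent {d k : ℕ} (D : Set (Pt d)) (ω : (Fin (k + 1) → Pt d) → ℝ)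
    (hna : Nonatomic D ω) (hcl : ClosedOnPlanes D ω) (j : Fin k)
    (S : Fin (k + 1) → Pt d) (hS : convexHull ℝ (Set.range S) ⊆ D) :
    ω (S ∘ Equiv.swap j.castSucc j.succ) = - ω S := by
  classical
  -- the degenerate simplex `p₀ … p_{j-1} p_j p_{j+1} p_j p_{j+2} … p_k`
  set g : Fin (k + 2) → Fin (k + 1) :=
    fun m => if m = j.succ.succ then j.castSucc else (j.succ).predAbove m with hg_def
  have hgval : ∀ m : Fin (k + 2), ((g m : Fin (k + 1)) : ℕ) =
      if (m : ℕ) = (j : ℕ) + 2 then (j : ℕ)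
      else if (m : ℕ) ≤ (j : ℕ) + 1 then (m : ℕ) else (m : ℕ) - 1 := by
    intro m
    rw [hg_def]
    simp only []
    by_cases hm : m = j.succ.succ
    · simp [hm]
    · rw [if_neg hm]
      have hmv : (m : ℕ) ≠ (j : ℕ) + 2 := by
        intro hc; exact hm (Fin.ext (by simpa using hc))
      rw [if_neg hmv, Fin.predAbove]
      split_ifs with h1 <;> simp [Fin.lt_def] at h1 ⊢ <;> omega
  -- parametrization of the affine plane through the vertices
  set L : (Fin k → ℝ) →ₗ[ℝ] Pt d :=
    ∑ i : Fin k, LinearMap.smulRight (LinearMap.proj i) (S i.succ - S 0) with hL_def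
  set φ : (Fin k → ℝ) →ᵃ[ℝ] Pt d :=
    L.toAffineMap + AffineMap.const ℝ (Fin k → ℝ) (S 0) with hφ_def
  set q : Fin (k + 1) → (Fin k → ℝ) :=
    fun m i => if (i.succ : Fin (k + 1)) = m then (1 : ℝ) else 0 with hq_def
  have hφq : ∀ m : Fin (k + 1), φ (q m) = S m := by
    intro m
    have hLq : L (q m) = ∑ i : Fin k,
        (if (i.succ : Fin (k + 1)) = m then (1 : ℝ) else 0) • (S i.succ - S 0) := by
      rw [hL_def]
      simp [LinearMap.sum_apply, hq_def]
    have hφm : φ (q m) = L (q m) + S 0 := by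
      rw [hφ_def]; rfl
    induction m using Fin.cases with
    | zero =>
      have : L (q 0) = 0 := by
        rw [hLq]
        apply Finset.sum_eq_zero
        intro i _
        rw [if_neg (Fin.succ_ne_zero i), zero_smul]
      rw [hφm, this, zero_add]
    | succ n =>
      have : L (q n.succ) = S n.succ - S 0 := by
        rw [hLq]
        have : ∀ i : Fin k, (if (i.succ : Fin (k + 1)) = n.succ then (1 : ℝ) else 0) •
            (S i.succ - S 0) = if i = n then S i.succ - S 0 else 0 := by
          intro i
          by_cases hi : i = n
          · simp [hi]
          · rw [if_neg (fun hc => hi (Fin.succ_injective _ hc)), if_neg hi, zero_smul]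
        rw [Finset.sum_congr rfl (fun i _ => this i), Finset.sum_ite_eq' Finset.univ n]
        simp
      rw [hφm, this, sub_add_cancel]
  -- the degenerate simplex lies in D
  have hTS : (fun i => φ (q (g i))) = S ∘ g := by
    funext i; exact hφq (g i)
  have hhull : convexHull ℝ (Set.range fun i => φ (q (g i))) ⊆ D := by
    rw [hTS]
    refine (convexHull_mono ?_).trans hS
    rintro _ ⟨x, rfl⟩; exact ⟨g x, rfl⟩
  have H := hcl φ (fun i => q (g i)) hhull
  rw [cobdry] at H
  have Hsum : ∑ i : Fin (k + 2), (-1 : ℝ) ^ (i : ℕ) * ω (S ∘ g ∘ i.succAbove) = 0 := by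
    rw [← H]
    apply Finset.sum_congr rfl
    intro i _
    have he : (S ∘ g ∘ i.succAbove) =
        fun v => φ (((fun i => q (g i)) ∘ i.succAbove) v) := by
      funext v
      simp only [Function.comp_apply]
      exact (hφq (g (i.succAbove v))).symm
    rw [he]
    rfl
  set F : Fin (k + 2) → ℝ := fun i => (-1 : ℝ) ^ (i : ℕ) * ω (S ∘ g ∘ i.succAbove) with hF_def
  set A : Fin (k + 2) := j.castSucc.castSucc with hA_def
  set A2 : Fin (k + 2) := j.succ.succ with hA2_def
  have hAv : (A : ℕ) = (j : ℕ) := by simp [hA_def]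
  have hA2v : (A2 : ℕ) = (j : ℕ) + 2 := by simp [hA2_def]
  have hArepeat : g A = j.castSucc ∧ g A2 = j.castSucc := by
    constructor <;> (apply Fin.ext; rw [hgval]; simp [hAv, hA2v])
  have hAne : A ≠ A2 := by
    intro hc; have := congrArg Fin.val hc; rw [hAv, hA2v] at this; omega
  -- every other face has a repeated vertex
  have hzero : ∀ i : Fin (k + 2), i ≠ A → i ≠ A2 → F i = 0 := by
    intro i hiA hiA2
    obtain ⟨u, hu⟩ := Fin.exists_succAbove_eq hiA.symm
    obtain ⟨v, hv⟩ := Fin.exists_succAbove_eq hiA2.symm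
    have huv : u ≠ v := by
      intro hc; rw [hc, hv] at hu; exact hAne hu.symm
    have hrep : (S ∘ g ∘ i.succAbove) u = (S ∘ g ∘ i.succAbove) v := by
      simp only [Function.comp_apply, hu, hv, hArepeat.1, hArepeat.2]
    have hhull' : convexHull ℝ (Set.range (S ∘ g ∘ i.succAbove)) ⊆ D := by
      refine (convexHull_mono ?_).trans hS
      rintro _ ⟨x, rfl⟩; exact ⟨g (i.succAbove x), rfl⟩
    rw [hF_def]
    simp only []
    rw [hna _ hhull' (vol_eq_zero_of_repeat huv hrep), mul_zero]
  -- face at A is the transposed simplex, face at A2 is S itself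
  have hfaceA : g ∘ A.succAbove = ⇑(Equiv.swap j.castSucc j.succ) := by
    funext m
    apply Fin.ext
    rw [Function.comp_apply, hgval, val_succAbove, hAv]
    simp only [Equiv.swap_apply_def, apply_ite Fin.val, Fin.ext_iff, Fin.coe_castSucc,
      Fin.val_succ]
    split_ifs <;> omega
  have hfaceA2 : g ∘ A2.succAbove = id := by
    funext m
    apply Fin.ext
    rw [Function.comp_apply, hgval, val_succAbove, hA2v]
    simp only [id_eq]
    split_ifs <;> omega
  have hsum2 : F A + F A2 = 0 := by
    rw [← Hsum]
    have hsub : ({A, A2} : Finset (Fin (k + 2))) ⊆ Finset.univ := Finset.subset_univ _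
    rw [← Finset.sum_subset hsub (fun x _ hx => by
      simp only [Finset.mem_insert, Finset.mem_singleton] at hx
      push_neg at hx
      exact hzero x hx.1 hx.2)]
    rw [Finset.sum_pair hAne]
  have hFA : F A = (-1 : ℝ) ^ (j : ℕ) * ω (S ∘ ⇑(Equiv.swap j.castSucc j.succ)) := by
    show (-1 : ℝ) ^ ((A : Fin (k + 2)) : ℕ) * ω (S ∘ g ∘ A.succAbove) = _
    rw [hfaceA, hAv]
  have hFA2 : F A2 = (-1 : ℝ) ^ (j : ℕ) * ω S := by
    show (-1 : ℝ) ^ ((A2 : Fin (k + 2)) : ℕ) * ω (S ∘ g ∘ A2.succAbove) = _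
    rw [hfaceA2, Function.comp_id, hA2v, pow_succ, pow_succ]
    ring
  rw [hFA, hFA2, ← mul_add] at hsum2
  have hne : (-1 : ℝ) ^ (j : ℕ) ≠ 0 := pow_ne_zero _ (by norm_num)
  have := (mul_eq_zero.mp hsum2).resolve_left hne
  linarith

/-- Every regular `k`-germ is alternating: if `ω` is nonatomic and closed on every
affine `k`-plane, then `⟨σS, ω⟩ = sign(σ)·⟨S, ω⟩` for every permutation `σ` of
`{0,…,k}` and every `k`-simplex `S` in `D`. -/
theorem regular_alternating {d k : ℕ} (D : Set (Pt d))
    (ω : (Fin (k + 1) → Pt d) → ℝ)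
    (hna : Nonatomic D ω) (hcl : ClosedOnPlanes D ω) :
    ∀ σ : Equiv.Perm (Fin (k + 1)), ∀ S : Fin (k + 1) → Pt d,
      convexHull ℝ (Set.range S) ⊆ D →
        ω (S ∘ ⇑σ⁻¹) = ((Equiv.Perm.sign σ : ℤ) : ℝ) * ω S := by
  classical
  intro σ
  have hmem : σ ∈ Submonoid.closure
      (Set.range fun i : Fin k => Equiv.swap i.castSucc i.succ) := by
    rw [Equiv.Perm.mclosure_swap_castSucc_succ]
    trivial
  induction hmem using Submonoid.closure_induction with
  | mem x hx =>
    obtain ⟨i, rfl⟩ := hx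
    intro S hS
    have hne : (i.castSucc : Fin (k + 1)) ≠ i.succ := Fin.castSucc_lt_succ.ne
    rw [Equiv.Perm.sign_swap hne]
    have hinv : (Equiv.swap i.castSucc i.succ)⁻¹ = Equiv.swap i.castSucc i.succ :=
      Equiv.swap_inv _ _
    rw [hinv, swap_adjacent D ω hna hcl i S hS]
    simp
  | one =>
    intro S hS
    simp
  | mul x y hx hy ihx ihy =>
    intro S hS
    have hco : S ∘ ⇑(x * y)⁻¹ = (S ∘ ⇑y⁻¹) ∘ ⇑x⁻¹ := by
      funext m; simp [Function.comp, Equiv.Perm.mul_apply]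
    have hrange : Set.range (S ∘ ⇑y⁻¹) = Set.range S :=
      Function.Surjective.range_comp (Equiv.surjective _) S
    have hS' : convexHull ℝ (Set.range (S ∘ ⇑y⁻¹)) ⊆ D := by rw [hrange]; exact hS
    rw [hco, ihx (S ∘ ⇑y⁻¹) hS', ihy S hS, map_mul]
    push_cast
    ring
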